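/- arXiv:2201.13387 — 6 statements merged into one kernel-verified Lean document; each statement's English description precedes it below -/
import Mathlib

section
/- Suppose each f_i is convex and L_i-smooth and x* is a global minimizer of F (so ∇F(x*) = 0). Let p be a probability vector with positive entries, x, w ∈ ℝ^d, and g_i = (1/(n p_i))(∇f_i(x) − ∇f_i(w)) + ∇F(w). Then ∑_{i=1}^n p_i ‖g_i − ∇F(x)‖² ≤ 4L̄(F(x) − F(x*)) + 4L̄(F(w) − F(x*)) + V_e(p; x, w) − V_e(p^IS; x, w). -/
open MeasureTheory Finset
open scoped RealInnerProductSpace BigOperators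

abbrev Euc (d : ℕ) := EuclideanSpace ℝ (Fin d)

/-- The finite-sum objective `F(x) = (1/n) ∑ f i x`. -/
noncomputable def avgF {d : ℕ} (n : ℕ) (f : Fin n → Euc d → ℝ) (x : Euc d) : ℝ :=
  (1 / (n : ℝ)) * ∑ i, f i x

/-- The gradient of the finite-sum objective, `∇F(x) = (1/n) ∑ ∇f i x`. -/
noncomputable def avgG {d : ℕ} (n : ℕ) (f' : Fin n → Euc d → Euc d) (x : Euc d) : Euc d :=
  (1 / (n : ℝ)) • ∑ i, f' i x

/-- The effective sampling variance `V_e(q; x, w)`. -/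
noncomputable def Ve {d : ℕ} (n : ℕ) (f' : Fin n → Euc d → Euc d)
    (q : Fin n → ℝ) (x w : Euc d) : ℝ :=
  (1 / (n : ℝ) ^ 2) * ∑ i, (1 / q i) * ‖f' i x - f' i w‖ ^ 2

/-- The average smoothness constant `L̄ = (1/n) ∑ L i`. -/
noncomputable def Lbar (n : ℕ) (L : Fin n → ℝ) : ℝ := (1 / (n : ℝ)) * ∑ i, L i

/-- The importance sampling distribution `p^IS_i = L i / (n L̄)`. -/
noncomputable def pIS (n : ℕ) (L : Fin n → ℝ) (i : Fin n) : ℝ :=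
  L i / ((n : ℝ) * Lbar n L)

lemma line_deriv {d : ℕ} (f : Euc d → ℝ) (f' : Euc d → Euc d)
    (hgrad : ∀ x, HasGradientAt f (f' x) x) (x v : Euc d) (t : ℝ) :
    HasDerivAt (fun s : ℝ => f (x + s • v)) ⟪f' (x + t • v), v⟫ t := by
  have hline : HasDerivAt (fun s : ℝ => x + s • v) v t := by
    simpa using ((hasDerivAt_id t).smul_const v).const_add x
  have hf := (hgrad (x + t • v)).hasFDerivAt
  have := hf.comp_hasDerivAt t hline
  simpa [InnerProductSpace.toDual_apply_apply, Function.comp_def] using this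

/-- Descent lemma. -/
lemma descent {d : ℕ} (f : Euc d → ℝ) (f' : Euc d → Euc d) (L : ℝ) (hL : 0 ≤ L)
    (hgrad : ∀ x, HasGradientAt f (f' x) x)
    (hsmooth : ∀ x y, ‖f' x - f' y‖ ≤ L * ‖x - y‖) (x y : Euc d) :
    f y ≤ f x + ⟪f' x, y - x⟫ + L / 2 * ‖y - x‖ ^ 2 := by
  set v := y - x with hv
  set φ : ℝ → ℝ := fun t => f (x + t • v) - t * ⟪f' x, v⟫ - L / 2 * t ^ 2 * ‖v‖ ^ 2 with hφ
  have hderiv : ∀ t : ℝ, HasDerivAt φ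
      (⟪f' (x + t • v), v⟫ - ⟪f' x, v⟫ - L * t * ‖v‖ ^ 2) t := by
    intro t
    have h1 := line_deriv f f' hgrad x v t
    have h2 : HasDerivAt (fun s : ℝ => s * ⟪f' x, v⟫) ⟪f' x, v⟫ t := by
      simpa using (hasDerivAt_id t).mul_const ⟪f' x, v⟫
    have h3 : HasDerivAt (fun s : ℝ => L / 2 * s ^ 2 * ‖v‖ ^ 2) (L * t * ‖v‖ ^ 2) t := by
      have : HasDerivAt (fun s : ℝ => s ^ 2) (2 * t) t := by
        simpa using hasDerivAt_pow 2 t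
      have := (this.const_mul (L / 2)).mul_const (‖v‖ ^ 2)
      exact this.congr_deriv (by ring)
    exact (h1.sub h2).sub h3
  have hanti : AntitoneOn φ (Set.Icc (0:ℝ) 1) := by
    apply antitoneOn_of_hasDerivWithinAt_nonpos (convex_Icc 0 1)
      (fun t _ => (hderiv t).continuousAt.continuousWithinAt)
      (fun t _ => ((hderiv t).hasDerivWithinAt))
    intro t ht
    rw [interior_Icc] at ht
    have hb : ⟪f' (x + t • v) - f' x, v⟫ ≤ L * t * ‖v‖ ^ 2 := by
      calc ⟪f' (x + t • v) - f' x, v⟫ ≤ ‖f' (x + t • v) - f' x‖ * ‖v‖ :=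
            real_inner_le_norm _ _
        _ ≤ (L * ‖(x + t • v) - x‖) * ‖v‖ := by
            gcongr; exact hsmooth _ _
        _ = L * (|t| * ‖v‖) * ‖v‖ := by
            rw [add_sub_cancel_left, norm_smul, Real.norm_eq_abs]
        _ = L * |t| * ‖v‖ ^ 2 := by ring
        _ = L * t * ‖v‖ ^ 2 := by rw [abs_of_pos ht.1]
    have := inner_sub_left (𝕜 := ℝ) (f' (x + t • v)) (f' x) v
    nlinarith [this]
  have h01 := hanti (Set.left_mem_Icc.2 zero_le_one) (Set.right_mem_Icc.2 zero_le_one) zero_le_one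
  simp only [hφ, zero_smul, add_zero, one_smul, zero_mul, one_mul, one_pow, mul_one] at h01
  have hxy : x + v = y := by simp [hv]
  rw [hxy] at h01
  nlinarith [h01]

/-- Co-coercivity: `‖∇f x − ∇f y‖² ≤ 2L (f x − f y − ⟪∇f y, x−y⟫)`. -/
lemma coco {d : ℕ} (f : Euc d → ℝ) (f' : Euc d → Euc d) (L : ℝ) (hL : 0 < L)
    (hgrad : ∀ x, HasGradientAt f (f' x) x)
    (hconv : ∀ x y, f x + ⟪f' x, y - x⟫ ≤ f y)
    (hsmooth : ∀ x y, ‖f' x - f' y‖ ≤ L * ‖x - y‖) (x y : Euc d) :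
    ‖f' x - f' y‖ ^ 2 ≤ 2 * L * (f x - f y - ⟪f' y, x - y⟫) := by
  set u := f' x - f' y with hu
  set z := x - (1 / L) • u with hz
  have h1 : f y + ⟪f' y, z - y⟫ ≤ f z := hconv y z
  have h2 : f z ≤ f x + ⟪f' x, z - x⟫ + L / 2 * ‖z - x‖ ^ 2 :=
    descent f f' L hL.le hgrad hsmooth x z
  have hzx : z - x = -((1 / L) • u) := by simp [hz]
  have hzy : z - y = (x - y) - (1 / L) • u := by simp [hz]; abel
  rw [hzy] at h1; rw [hzx] at h2
  have e1 : ⟪f' y, x - y - (1 / L) • u⟫ = ⟪f' y, x - y⟫ - (1/L) * ⟪f' y, u⟫ := by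
    rw [inner_sub_right, real_inner_smul_right]
  have e2 : ⟪f' x, -((1 / L) • u)⟫ = -((1/L) * ⟪f' x, u⟫) := by
    rw [inner_neg_right, real_inner_smul_right]
  have e3 : ‖-((1 / L) • u)‖ ^ 2 = (1/L)^2 * ‖u‖^2 := by
    rw [norm_neg, norm_smul, mul_pow, Real.norm_eq_abs]
    congr 1
    rw [sq_abs]
  have e4 : ⟪f' x, u⟫ - ⟪f' y, u⟫ = ‖u‖ ^ 2 := by
    rw [← inner_sub_left, ← hu, real_inner_self_eq_norm_sq]
  have hL' : L ≠ 0 := hL.ne'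
  rw [e1] at h1; rw [e2, e3] at h2
  have := h1.trans h2
  have key : (1 / L) * ‖u‖ ^ 2 - L / 2 * ((1/L)^2 * ‖u‖^2) ≤ f x - f y - ⟪f' y, x - y⟫ := by
    have e5 : (1/L) * ⟪f' x, u⟫ - (1/L) * ⟪f' y, u⟫ = (1/L) * ‖u‖ ^ 2 := by
      rw [← mul_sub, e4]
    linarith [this, e5]
  have : (1 / L) * ‖u‖ ^ 2 - L / 2 * ((1/L)^2 * ‖u‖^2) = ‖u‖^2 / (2 * L) := by
    field_simp; ring
  rw [this] at key
  rw [div_le_iff₀ (by positivity)] at key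
  nlinarith [key]

lemma avg_hasGradient {d n : ℕ} (f : Fin n → Euc d → ℝ) (f' : Fin n → Euc d → Euc d)
    (hgrad : ∀ i x, HasGradientAt (f i) (f' i x) x) (y : Euc d) :
    HasGradientAt (avgF n f) (avgG n f' y) y := by
  have hsum : HasFDerivAt (fun x => ∑ i, f i x)
      (∑ i, InnerProductSpace.toDual ℝ (Euc d) (f' i y)) y :=
    HasFDerivAt.fun_sum (fun i _ => (hgrad i y).hasFDerivAt)
  have h2 : HasFDerivAt (avgF n f)
      ((1 / (n : ℝ)) • ∑ i, InnerProductSpace.toDual ℝ (Euc d) (f' i y)) y := by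
    have := hsum.const_smul (1 / (n : ℝ))
    unfold avgF
    simpa [smul_eq_mul, one_div, Pi.smul_def] using this
  rw [hasGradientAt_iff_hasFDerivAt]
  refine h2.congr_fderiv ?_
  simp [avgG, _root_.map_smul, map_sum]

lemma grad_zero_at_min {d n : ℕ} (f : Fin n → Euc d → ℝ) (f' : Fin n → Euc d → Euc d)
    (hgrad : ∀ i x, HasGradientAt (f i) (f' i x) x) (xstar : Euc d)
    (hmin : ∀ y, avgF n f xstar ≤ avgF n f y) :
    avgG n f' xstar = 0 := by
  have hloc : IsLocalMin (avgF n f) xstar := Filter.Eventually.of_forall hmin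
  have h0 := hloc.hasFDerivAt_eq_zero ((avg_hasGradient f f' hgrad xstar).hasFDerivAt)
  have := congrArg (InnerProductSpace.toDual ℝ (Euc d)).symm h0
  simpa using this

/-- variance bound for the AS-LSVRG stochastic gradient. -/
theorem as_lsvrg_variance_bound (d n : ℕ) (hd : 0 < d) (hn : 0 < n)
    (f : Fin n → Euc d → ℝ) (f' : Fin n → Euc d → Euc d) (L : Fin n → ℝ)
    (hgrad : ∀ i x, HasGradientAt (f i) (f' i x) x)
    (hconv : ∀ i x y, f i x + ⟪f' i x, y - x⟫ ≤ f i y)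
    (hLpos : ∀ i, 0 < L i)
    (hsmooth : ∀ i x y, ‖f' i x - f' i y‖ ≤ L i * ‖x - y‖)
    (xstar : Euc d) (hmin : ∀ y, avgF n f xstar ≤ avgF n f y)
    (p : Fin n → ℝ) (hp : ∀ i, 0 < p i) (hp1 : ∑ i, p i = 1)
    (x w : Euc d)
    (g : Fin n → Euc d)
    (hg : ∀ i, g i = (1 / ((n : ℝ) * p i)) • (f' i x - f' i w) + avgG n f' w) :
    ∑ i, p i * ‖g i - avgG n f' x‖ ^ 2 ≤
      4 * Lbar n L * (avgF n f x - avgF n f xstar) +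
      4 * Lbar n L * (avgF n f w - avgF n f xstar) +
      Ve n f' p x w - Ve n f' (pIS n L) x w := by
  have hn' : (0:ℝ) < (n:ℝ) := by exact_mod_cast hn
  have hn0 : (n:ℝ) ≠ 0 := hn'.ne'
  set a : Fin n → Euc d := fun i => f' i x - f' i w with ha
  set S : Euc d := ∑ i, a i with hS
  set m : Euc d := avgG n f' x - avgG n f' w with hm
  have hmS : m = (1 / (n:ℝ)) • S := by
    simp only [hm, avgG, hS, ha, ← smul_sub, ← Finset.sum_sub_distrib]
  -- Identity: LHS = Ve p x w - ‖m‖^2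
  have expand : ∀ i, p i * ‖g i - avgG n f' x‖ ^ 2 =
      (1 / (n : ℝ) ^ 2) * ((1 / p i) * ‖a i‖ ^ 2) - (2 / n) * ⟪a i, m⟫ + p i * ‖m‖ ^ 2 := by
    intro i
    have hpi := hp i
    have hgi : g i - avgG n f' x = (1 / ((n : ℝ) * p i)) • a i - m := by
      rw [hg i, hm]; abel
    rw [hgi, norm_sub_sq_real, real_inner_smul_left, norm_smul]
    rw [Real.norm_eq_abs, abs_of_pos (by positivity)]
    field_simp
  have hsum_inner : ∑ i, ⟪a i, m⟫ = (1 / (n:ℝ)) * ‖S‖ ^ 2 := by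
    rw [← sum_inner, ← hS, hmS, real_inner_smul_right, real_inner_self_eq_norm_sq]
  have hm2 : ‖m‖ ^ 2 = (1 / (n:ℝ))^2 * ‖S‖ ^ 2 := by
    rw [hmS, norm_smul, mul_pow, Real.norm_eq_abs, sq_abs]
  have hIdent : ∑ i, p i * ‖g i - avgG n f' x‖ ^ 2 = Ve n f' p x w - ‖m‖ ^ 2 := by
    simp only [expand]
    rw [Finset.sum_add_distrib, Finset.sum_sub_distrib, ← Finset.mul_sum, ← Finset.mul_sum,
      ← Finset.sum_mul, hp1, hsum_inner, hm2, Ve]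
    field_simp
    ring
  -- Bound Ve pIS
  have hLbar : 0 < Lbar n L := by
    apply mul_pos (by positivity)
    exact Finset.sum_pos (fun i _ => hLpos i) ⟨⟨0, hn⟩, Finset.mem_univ _⟩
  have hGstar : avgG n f' xstar = 0 := grad_zero_at_min f f' hgrad xstar hmin
  set D : Euc d → ℝ := fun y =>
    (1 / (n:ℝ)) * ∑ i, (f i y - f i xstar - ⟪f' i xstar, y - xstar⟫) with hD
  have hDeq : ∀ y, D y = avgF n f y - avgF n f xstar := by
    intro y
    have hsum0 : ∑ i, ⟪f' i xstar, y - xstar⟫ = 0 := by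
      rw [← sum_inner]
      have : ∑ i, f' i xstar = (0 : Euc d) := by
        have := hGstar
        rw [avgG] at this
        have h2 := congrArg (fun z => (n:ℝ) • z) this
        simpa [smul_smul, hn0] using h2
      rw [this, inner_zero_left]
    simp only [hD, avgF, Finset.sum_sub_distrib, hsum0]
    ring
  have hVe : Ve n f' (pIS n L) x w ≤
      4 * Lbar n L * (avgF n f x - avgF n f xstar) +
      4 * Lbar n L * (avgF n f w - avgF n f xstar) := by
    have hterm : ∀ i, (1 / pIS n L i) * ‖a i‖ ^ 2 ≤
        (n:ℝ) * Lbar n L * (4 * (f i x - f i xstar - ⟪f' i xstar, x - xstar⟫)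
          + 4 * (f i w - f i xstar - ⟪f' i xstar, w - xstar⟫)) := by
      intro i
      have hLi := hLpos i
      have hc1 : ‖f' i x - f' i xstar‖ ^ 2 ≤
          2 * L i * (f i x - f i xstar - ⟪f' i xstar, x - xstar⟫) :=
        coco (f i) (f' i) (L i) hLi (hgrad i) (hconv i) (hsmooth i) x xstar
      have hc2 : ‖f' i w - f' i xstar‖ ^ 2 ≤
          2 * L i * (f i w - f i xstar - ⟪f' i xstar, w - xstar⟫) :=
        coco (f i) (f' i) (L i) hLi (hgrad i) (hconv i) (hsmooth i) w xstar
      have hsplit : ‖a i‖ ^ 2 ≤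
          2 * ‖f' i x - f' i xstar‖ ^ 2 + 2 * ‖f' i w - f' i xstar‖ ^ 2 := by
        have h1 : a i = (f' i x - f' i xstar) - (f' i w - f' i xstar) := by
          rw [ha]; abel
        have h2 : ‖a i‖ ≤ ‖f' i x - f' i xstar‖ + ‖f' i w - f' i xstar‖ := by
          rw [h1]; exact norm_sub_le _ _
        nlinarith [norm_nonneg (a i), norm_nonneg (f' i x - f' i xstar),
          norm_nonneg (f' i w - f' i xstar), sq_nonneg (‖f' i x - f' i xstar‖ - ‖f' i w - f' i xstar‖)]
      have hpIS : 1 / pIS n L i = (n:ℝ) * Lbar n L / L i := by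
        rw [pIS]; field_simp
      have hbound : ‖a i‖ ^ 2 ≤
          4 * L i * (f i x - f i xstar - ⟪f' i xstar, x - xstar⟫)
          + 4 * L i * (f i w - f i xstar - ⟪f' i xstar, w - xstar⟫) := by
        linarith [hsplit, hc1, hc2]
      have hnL : 0 < (n:ℝ) * Lbar n L := mul_pos hn' hLbar
      rw [hpIS]
      calc (n:ℝ) * Lbar n L / L i * ‖a i‖ ^ 2
          ≤ (n:ℝ) * Lbar n L / L i *
            (4 * L i * (f i x - f i xstar - ⟪f' i xstar, x - xstar⟫)
              + 4 * L i * (f i w - f i xstar - ⟪f' i xstar, w - xstar⟫)) := by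
            exact mul_le_mul_of_nonneg_left hbound (le_of_lt (div_pos hnL hLi))
        _ = (n:ℝ) * Lbar n L *
            (4 * (f i x - f i xstar - ⟪f' i xstar, x - xstar⟫)
              + 4 * (f i w - f i xstar - ⟪f' i xstar, w - xstar⟫)) := by
            field_simp
    have hsum := Finset.sum_le_sum (s := Finset.univ) (fun i _ => hterm i)
    rw [Ve]
    calc (1 / (n : ℝ) ^ 2) * ∑ i, (1 / pIS n L i) * ‖a i‖ ^ 2
        ≤ (1 / (n : ℝ) ^ 2) * ∑ i, (n:ℝ) * Lbar n L *
            (4 * (f i x - f i xstar - ⟪f' i xstar, x - xstar⟫)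
              + 4 * (f i w - f i xstar - ⟪f' i xstar, w - xstar⟫)) := by
          apply mul_le_mul_of_nonneg_left hsum (by positivity)
      _ = 4 * Lbar n L * D x + 4 * Lbar n L * D w := by
          rw [← Finset.mul_sum, Finset.sum_add_distrib, ← Finset.mul_sum, ← Finset.mul_sum]
          simp only [hD]
          generalize (∑ i, (f i x - f i xstar - ⟪f' i xstar, x - xstar⟫)) = Sx
          generalize (∑ i, (f i w - f i xstar - ⟪f' i xstar, w - xstar⟫)) = Sw
          field_simp
      _ = 4 * Lbar n L * (avgF n f x - avgF n f xstar)
            + 4 * Lbar n L * (avgF n f w - avgF n f xstar) := by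
          rw [hDeq, hDeq]
  rw [hIdent]
  have := sq_nonneg ‖m‖
  linarith [hVe, this]
end

section
/- Let L̄ > 0, η > 0, μ ≥ 0 and κ = μ/L̄. For any vectors x, z, g, x* ∈ ℝ^d, define z' = (1/(1 + ηκ))(ηκ·x + z − (η/L̄)g). Then ⟨g, x* − z'⟩ + (μ/2)‖x − x*‖² ≥ (L̄/(2η))‖z − z'‖² + (L̄(1 + ηκ)/(2η))‖z' − x*‖² − (L̄/(2η))‖z − x*‖². -/
open scoped RealInnerProductSpace BigOperators

/-- the three-point inequality for the L-Katyusha `z`-update. -/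
theorem katyusha_z_update_ineq (d : ℕ) (hd : 0 < d)
    (Lb η μ κ : ℝ) (hLb : 0 < Lb) (hη : 0 < η) (hμ : 0 ≤ μ) (hκ : κ = μ / Lb)
    (x z g xstar : Euc d)
    (z' : Euc d)
    (hz' : z' = (1 / (1 + η * κ)) • (η • κ • x + z - (η / Lb) • g)) :
    ⟪g, xstar - z'⟫ + (μ / 2) * ‖x - xstar‖ ^ 2 ≥
      (Lb / (2 * η)) * ‖z - z'‖ ^ 2 +
      (Lb * (1 + η * κ) / (2 * η)) * ‖z' - xstar‖ ^ 2 -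
      (Lb / (2 * η)) * ‖z - xstar‖ ^ 2 := by
  subst hκ
  have ha : 0 < 1 + η * (μ / Lb) := by positivity
  have hg : g = (Lb / η) • (η • (μ / Lb) • x + z - (1 + η * (μ / Lb)) • z') := by
    have h1 : (1 + η * (μ / Lb)) • z' = η • (μ / Lb) • x + z - (η / Lb) • g := by
      rw [hz', smul_smul]
      field_simp
      rw [one_smul]
    have h2 : (η / Lb) • g = η • (μ / Lb) • x + z - (1 + η * (μ / Lb)) • z' := by
      rw [h1]; abel
    calc g = (Lb / η) • ((η / Lb) • g) := by
              rw [smul_smul]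
              rw [show Lb / η * (η / Lb) = 1 by field_simp]
              simp
      _ = (Lb / η) • (η • (μ / Lb) • x + z - (1 + η * (μ / Lb)) • z') := by rw [h2]
  have key : ⟪g, xstar - z'⟫ + (μ / 2) * ‖x - xstar‖ ^ 2 =
      (Lb / (2 * η)) * ‖z - z'‖ ^ 2 +
      (Lb * (1 + η * (μ / Lb)) / (2 * η)) * ‖z' - xstar‖ ^ 2 -
      (Lb / (2 * η)) * ‖z - xstar‖ ^ 2 + (μ / 2) * ‖x - z'‖ ^ 2 := by
    rw [hg]
    simp only [← real_inner_self_eq_norm_sq]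
    simp only [inner_sub_left, inner_sub_right, inner_add_left, inner_add_right,
      real_inner_smul_left, real_inner_smul_right, real_inner_comm z' x,
      real_inner_comm z x, real_inner_comm xstar x, real_inner_comm z' z,
      real_inner_comm xstar z, real_inner_comm xstar z']
    field_simp
    ring
  have h0 : 0 ≤ (μ / 2) * ‖x - z'‖ ^ 2 := by positivity
  linarith [key]
end

section
/- Let F : ℝ^d → ℝ be convex, differentiable and L̄-smooth (‖∇F(x) − ∇F(y)‖ ≤ L̄‖x − y‖, with L̄ > 0). Let η > 0 and θ₁ > 0 with ηθ₁ < 1, let x, z, z', g ∈ ℝ^d and set v' = x + θ₁(z' − z). Then (L̄/(2η))‖z' − z‖² + ⟨g, z' − z⟩ ≥ (1/θ₁)(F(v') − F(x)) − (η/(2L̄(1 − ηθ₁)))‖g − ∇F(x)‖². -/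
open scoped RealInnerProductSpace BigOperators

/-- The descent lemma: an `Lb`-smooth function admits a quadratic upper bound. -/
lemma descent_lemma {d : ℕ} (F : Euc d → ℝ) (F' : Euc d → Euc d) (Lb : ℝ)
    (hgrad : ∀ x, HasGradientAt F (F' x) x)
    (hsmooth : ∀ x y, ‖F' x - F' y‖ ≤ Lb * ‖x - y‖) (a b : Euc d) :
    F b ≤ F a + ⟪F' a, b - a⟫ + Lb / 2 * ‖b - a‖ ^ 2 := by
  set h : Euc d := b - a with hh
  have hline : ∀ t : ℝ, HasDerivAt (fun t : ℝ => a + t • h) h t := fun t =>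
    ((hasDerivAt_id t).smul_const h).const_add a |>.congr_deriv (by simp)
  have hφ : ∀ t : ℝ, HasDerivAt (fun t : ℝ => F (a + t • h)) ⟪F' (a + t • h), h⟫ t := by
    intro t
    have := ((hgrad (a + t • h)).hasFDerivAt.comp_hasDerivAt t (hline t))
    simp at this
    exact this
  set ψ : ℝ → ℝ := fun t => F a + t * ⟪F' a, h⟫ + Lb * ‖h‖ ^ 2 / 2 * t ^ 2 - F (a + t • h)
    with hψ
  have hψd : ∀ t : ℝ, HasDerivAt ψ
      (⟪F' a, h⟫ + Lb * ‖h‖ ^ 2 * t - ⟪F' (a + t • h), h⟫) t := by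
    intro t
    have h1 : HasDerivAt (fun t : ℝ => F a + t * ⟪F' a, h⟫ + Lb * ‖h‖ ^ 2 / 2 * t ^ 2)
        (⟪F' a, h⟫ + Lb * ‖h‖ ^ 2 * t) t := by
      have h0 : HasDerivAt (fun t : ℝ => F a + t * ⟪F' a, h⟫ + Lb * ‖h‖ ^ 2 / 2 * t ^ 2)
          (0 + 1 * ⟪F' a, h⟫ + Lb * ‖h‖ ^ 2 / 2 * (2 * t)) t := by
        apply HasDerivAt.add
        · exact (hasDerivAt_const t (F a)).add ((hasDerivAt_id t).mul_const _)
        · simpa using ((hasDerivAt_pow 2 t).const_mul (Lb * ‖h‖ ^ 2 / 2))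
      convert h0 using 1; ring
    exact h1.sub (hφ t)
  have hmono : MonotoneOn ψ (Set.Icc (0:ℝ) 1) := by
    apply monotoneOn_of_deriv_nonneg (convex_Icc 0 1)
    · exact Continuous.continuousOn (continuous_iff_continuousAt.2 fun t =>
        (hψd t).differentiableAt.continuousAt)
    · exact fun t _ => (hψd t).differentiableAt.differentiableWithinAt
    · intro t ht
      rw [(hψd t).deriv]
      rw [interior_Icc] at ht
      have h2 : ⟪F' (a + t • h) - F' a, h⟫ ≤ Lb * ‖h‖ ^ 2 * t := by
        calc ⟪F' (a + t • h) - F' a, h⟫ ≤ ‖F' (a + t • h) - F' a‖ * ‖h‖ :=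
              real_inner_le_norm _ _
        _ ≤ Lb * ‖(a + t • h) - a‖ * ‖h‖ := by gcongr; exact hsmooth _ _
        _ = Lb * ‖h‖ ^ 2 * t := by
            simp [norm_smul, abs_of_nonneg ht.1.le]; ring
      rw [inner_sub_left] at h2
      linarith
  have hψ0 : ψ 0 = 0 := by simp [hψ]
  have h01 : ψ 0 ≤ ψ 1 := hmono (by norm_num) (by norm_num) zero_le_one
  have hψ1 : ψ 1 = F a + ⟪F' a, h⟫ + Lb * ‖h‖ ^ 2 / 2 - F b := by
    have : a + h = b := by rw [hh]; abel
    simp [hψ, this]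
  rw [hψ0, hψ1] at h01
  linarith

/-- inequality relating the `z`-update progress to function values. -/
theorem katyusha_progress_ineq (d : ℕ) (hd : 0 < d)
    (F : Euc d → ℝ) (F' : Euc d → Euc d) (Lb : ℝ) (hLb : 0 < Lb)
    (hgrad : ∀ x, HasGradientAt F (F' x) x)
    (hconv : ConvexOn ℝ Set.univ F)
    (hsmooth : ∀ x y, ‖F' x - F' y‖ ≤ Lb * ‖x - y‖)
    (η θ₁ : ℝ) (hη : 0 < η) (hθ₁ : 0 < θ₁) (hηθ : η * θ₁ < 1)
    (x z z' g : Euc d) (v' : Euc d) (hv' : v' = x + θ₁ • (z' - z)) :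
    (Lb / (2 * η)) * ‖z' - z‖ ^ 2 + ⟪g, z' - z⟫ ≥
      (1 / θ₁) * (F v' - F x) -
      (η / (2 * Lb * (1 - η * θ₁))) * ‖g - F' x‖ ^ 2 := by
  set w : Euc d := z' - z with hw
  have hvx : v' - x = θ₁ • w := by rw [hv']; abel
  have hdesc := descent_lemma F F' Lb hgrad hsmooth x v'
  rw [hvx, real_inner_smul_right, norm_smul, mul_pow, Real.norm_eq_abs,
    abs_of_pos hθ₁] at hdesc
  set I : ℝ := ⟪F' x, w⟫
  set G : ℝ := ⟪g, w⟫ with hG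
  set A : ℝ := ‖g - F' x‖ with hA
  set W : ℝ := ‖w‖ with hW
  have key1 : (1 / θ₁) * (F v' - F x) ≤ I + Lb * θ₁ / 2 * W ^ 2 := by
    rw [div_mul_eq_mul_div, div_le_iff₀ hθ₁]
    nlinarith
  have key2 : I - G ≤ A * W := by
    have hIG : I - G = ⟪F' x - g, w⟫ := by rw [inner_sub_left]
    rw [hIG]
    calc ⟪F' x - g, w⟫ ≤ ‖F' x - g‖ * ‖w‖ := real_inner_le_norm _ _
    _ = A * W := by rw [norm_sub_rev]
  set β : ℝ := Lb * (1 - η * θ₁) / η with hβ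
  have h1θ : 0 < 1 - η * θ₁ := by linarith
  have hβpos : 0 < β := by positivity
  set c : ℝ := η / (2 * Lb * (1 - η * θ₁)) with hc
  have hcβ : 2 * c * β = 1 := by rw [hc, hβ]; field_simp
  have key3 : A * W ≤ c * A ^ 2 + β / 2 * W ^ 2 := by
    nlinarith [sq_nonneg (A - β * W), hβpos, hcβ, mul_pos hβpos hβpos]
  have hcoef : β / 2 + Lb * θ₁ / 2 = Lb / (2 * η) := by
    rw [hβ]; field_simp; ring
  have hcoef2 : β / 2 * W ^ 2 + Lb * θ₁ / 2 * W ^ 2 = Lb / (2 * η) * W ^ 2 := by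
    rw [← add_mul, hcoef]
  linarith
end

section
/- Let x, w ∈ ℝ^d be such that ∇f_i(x) ≠ ∇f_i(w) for every i = 1,…,n, and define p*_i = ‖∇f_i(x) − ∇f_i(w)‖ / ∑_{j=1}^n ‖∇f_j(x) − ∇f_j(w)‖. Then p* is a probability vector with positive entries, V_e(p*; x, w) = ((1/n)∑_{i=1}^n ‖∇f_i(x) − ∇f_i(w)‖)², and for every probability vector q with positive entries, V_e(p*; x, w) ≤ V_e(q; x, w). -/
open MeasureTheory Finset
open scoped RealInnerProductSpace BigOperators

/-- the oracle optimal dynamic sampling distribution and its optimality. -/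
theorem optimal_sampling_distribution (d n : ℕ) (hd : 0 < d) (hn : 0 < n)
    (f : Fin n → Euc d → ℝ) (f' : Fin n → Euc d → Euc d)
    (hgrad : ∀ i x, HasGradientAt (f i) (f' i x) x)
    (x w : Euc d) (hne : ∀ i, f' i x ≠ f' i w)
    (pstar : Fin n → ℝ)
    (hpstar : ∀ i, pstar i = ‖f' i x - f' i w‖ / ∑ j, ‖f' j x - f' j w‖) :
    (∀ i, 0 < pstar i) ∧ (∑ i, pstar i = 1) ∧
    Ve n f' pstar x w = ((1 / (n : ℝ)) * ∑ i, ‖f' i x - f' i w‖) ^ 2 ∧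
    ∀ q : Fin n → ℝ, (∀ i, 0 < q i) → (∑ i, q i = 1) →
      Ve n f' pstar x w ≤ Ve n f' q x w := by
  set a : Fin n → ℝ := fun i => ‖f' i x - f' i w‖ with ha
  have hapos : ∀ i, 0 < a i := fun i =>
    norm_pos_iff.mpr (sub_ne_zero.mpr (hne i))
  set S : ℝ := ∑ j, a j with hS
  have hSpos : 0 < S := Finset.sum_pos (fun i _ => hapos i) (univ_nonempty_iff.mpr ⟨⟨0, hn⟩⟩)
  have hppos : ∀ i, 0 < pstar i := fun i => by
    rw [hpstar i]; exact div_pos (hapos i) hSpos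
  have hpsum : ∑ i, pstar i = 1 := by
    have : ∑ i, pstar i = (∑ i, a i) / S := by
      rw [Finset.sum_div]; exact Finset.sum_congr rfl fun i _ => hpstar i
    rw [this, ← hS, div_self hSpos.ne']
  have hVeq : Ve n f' pstar x w = ((1 / (n : ℝ)) * ∑ i, a i) ^ 2 := by
    have hsum : ∑ i, (1 / pstar i) * a i ^ 2 = S * S := by
      have : ∀ i ∈ (univ : Finset (Fin n)), (1 / pstar i) * a i ^ 2 = S * a i := by
        intro i _
        rw [hpstar i]
        field_simp [(hapos i).ne']
        simp only [ha] at hapos ⊢; field_simp [(hapos i).ne']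
      rw [Finset.sum_congr rfl this, ← Finset.mul_sum]
    rw [Ve, hsum]
    have hn' : (n : ℝ) ≠ 0 := Nat.cast_ne_zero.mpr hn.ne'
    field_simp
    ring
  refine ⟨hppos, hpsum, hVeq, ?_⟩
  intro q hq hq1
  rw [hVeq, Ve]
  have hCS : (∑ i, a i) ^ 2 ≤ ∑ i, (1 / q i) * a i ^ 2 := by
    have key := Finset.sum_mul_sq_le_sq_mul_sq
      (univ : Finset (Fin n)) (fun i => Real.sqrt (q i)) (fun i => a i / Real.sqrt (q i))
    have h1 : ∀ i ∈ (univ : Finset (Fin n)),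
        Real.sqrt (q i) * (a i / Real.sqrt (q i)) = a i := by
      intro i _
      rw [mul_div_cancel₀ _ (Real.sqrt_ne_zero'.mpr (hq i))]
    have h2 : ∀ i ∈ (univ : Finset (Fin n)), Real.sqrt (q i) ^ 2 = q i := by
      intro i _; exact Real.sq_sqrt (hq i).le
    have h3 : ∀ i ∈ (univ : Finset (Fin n)),
        (a i / Real.sqrt (q i)) ^ 2 = (1 / q i) * a i ^ 2 := by
      intro i _
      rw [div_pow, Real.sq_sqrt (hq i).le]
      ring
    calc (∑ i, a i) ^ 2
        = (∑ i, Real.sqrt (q i) * (a i / Real.sqrt (q i))) ^ 2 := by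
          rw [Finset.sum_congr rfl h1]
      _ ≤ (∑ i, Real.sqrt (q i) ^ 2) * ∑ i, (a i / Real.sqrt (q i)) ^ 2 := key
      _ = (∑ i, q i) * ∑ i, (1 / q i) * a i ^ 2 := by
          rw [Finset.sum_congr rfl h2, Finset.sum_congr rfl h3]
      _ = ∑ i, (1 / q i) * a i ^ 2 := by rw [hq1, one_mul]
  have hn2 : (0:ℝ) < (n : ℝ) ^ 2 := by positivity
  calc ((1 / (n : ℝ)) * ∑ i, a i) ^ 2 = (1 / (n : ℝ) ^ 2) * (∑ i, a i) ^ 2 := by ring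
    _ ≤ (1 / (n : ℝ) ^ 2) * ∑ i, (1 / q i) * a i ^ 2 := by
        apply mul_le_mul_of_nonneg_left hCS; positivity
end

section
/- Suppose F is differentiable and μ-strongly convex with μ > 0. Let p be a probability vector with positive entries, x, w, x* ∈ ℝ^d, η > 0, and g_i = (1/(n p_i))(∇f_i(x) − ∇f_i(w)) + ∇F(w). Then ∑_{i=1}^n p_i ‖x − ηg_i − x*‖² ≤ (1 − ημ)‖x − x*‖² − 2η(F(x) − F(x*)) + η² ∑_{i=1}^n p_i ‖g_i‖². -/
open MeasureTheory Finset
open scoped RealInnerProductSpace BigOperators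

/-- `D(w) = (1/n) ∑ (1 / L i) ‖∇f i w - ∇f i x*‖²`. -/
noncomputable def Dfun {d : ℕ} (n : ℕ) (f' : Fin n → Euc d → Euc d) (L : Fin n → ℝ)
    (xstar w : Euc d) : ℝ :=
  (1 / (n : ℝ)) * ∑ i, (1 / L i) * ‖f' i w - f' i xstar‖ ^ 2

/-- one-step descent inequality under strong convexity. -/
theorem strong_convexity_descent_step (d n : ℕ) (hd : 0 < d) (hn : 0 < n)
    (f : Fin n → Euc d → ℝ) (f' : Fin n → Euc d → Euc d)
    (hgrad : ∀ i x, HasGradientAt (f i) (f' i x) x)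
    (μ : ℝ) (hμ : 0 < μ)
    (hsc : ∀ x y : Euc d,
      avgF n f x + ⟪avgG n f' x, y - x⟫ + (μ / 2) * ‖y - x‖ ^ 2 ≤ avgF n f y)
    (p : Fin n → ℝ) (hp : ∀ i, 0 < p i) (hp1 : ∑ i, p i = 1)
    (x w xstar : Euc d) (η : ℝ) (hη : 0 < η)
    (g : Fin n → Euc d)
    (hg : ∀ i, g i = (1 / ((n : ℝ) * p i)) • (f' i x - f' i w) + avgG n f' w) :
    ∑ i, p i * ‖x - η • g i - xstar‖ ^ 2 ≤
      (1 - η * μ) * ‖x - xstar‖ ^ 2 -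
      2 * η * (avgF n f x - avgF n f xstar) +
      η ^ 2 * ∑ i, p i * ‖g i‖ ^ 2 := by

  -- Expand each squared norm
  have expand : ∀ i, ‖x - η • g i - xstar‖ ^ 2 =
      ‖x - xstar‖ ^ 2 - 2 * η * ⟪g i, x - xstar⟫ + η ^ 2 * ‖g i‖ ^ 2 := by
    intro i
    have h1 : x - η • g i - xstar = (x - xstar) - η • g i := by abel
    rw [h1, norm_sub_sq_real, real_inner_smul_right, norm_smul]
    have : ⟪x - xstar, g i⟫ = ⟪g i, x - xstar⟫ := real_inner_comm _ _
    rw [this]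
    simp [abs_of_pos hη]
    ring
  -- Unbiasedness: ∑ p i • g i = avgG n f' x
  have unbiased : ∑ i, p i • g i = avgG n f' x := by
    have : ∀ i, p i • g i = (1 / (n : ℝ)) • (f' i x - f' i w) + p i • avgG n f' w := by
      intro i
      rw [hg i, smul_add, smul_smul]
      congr 2
      have hn' : (n : ℝ) ≠ 0 := Nat.cast_ne_zero.mpr hn.ne'
      have hpi := (hp i).ne'
      field_simp
    rw [Finset.sum_congr rfl (fun i _ => this i), Finset.sum_add_distrib]
    rw [← Finset.sum_smul, hp1, one_smul, ← Finset.smul_sum]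
    simp only [avgG, Finset.sum_sub_distrib, smul_sub]
    abel
  -- Sum of inner products
  have hsum_inner : ∑ i, p i * ⟪g i, x - xstar⟫ = ⟪avgG n f' x, x - xstar⟫ := by
    rw [← unbiased, sum_inner]
    exact Finset.sum_congr rfl (fun i _ => (real_inner_smul_left _ _ _).symm)
  -- Strong convexity gives the key inner product bound
  have hscx := hsc x xstar
  have hlb : avgF n f x - avgF n f xstar + (μ / 2) * ‖x - xstar‖ ^ 2 ≤
      ⟪avgG n f' x, x - xstar⟫ := by
    have h2 : ⟪avgG n f' x, xstar - x⟫ = - ⟪avgG n f' x, x - xstar⟫ := by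
      rw [← inner_neg_right]; congr 1; abel
    have h3 : ‖xstar - x‖ = ‖x - xstar‖ := norm_sub_rev _ _
    rw [h2, h3] at hscx
    linarith
  -- Put everything together
  calc ∑ i, p i * ‖x - η • g i - xstar‖ ^ 2
      = ∑ i, p i * (‖x - xstar‖ ^ 2 - 2 * η * ⟪g i, x - xstar⟫ + η ^ 2 * ‖g i‖ ^ 2) := by
        exact Finset.sum_congr rfl (fun i _ => by rw [expand i])
    _ = ‖x - xstar‖ ^ 2 - 2 * η * ⟪avgG n f' x, x - xstar⟫
        + η ^ 2 * ∑ i, p i * ‖g i‖ ^ 2 := by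
        rw [← hsum_inner]
        have e1 : ∀ i, p i * (‖x - xstar‖ ^ 2 - 2 * η * ⟪g i, x - xstar⟫ + η ^ 2 * ‖g i‖ ^ 2)
            = p i * ‖x - xstar‖ ^ 2 - 2 * η * (p i * ⟪g i, x - xstar⟫)
              + η ^ 2 * (p i * ‖g i‖ ^ 2) := fun i => by ring
        rw [Finset.sum_congr rfl (fun i _ => e1 i), Finset.sum_add_distrib,
          Finset.sum_sub_distrib, ← Finset.sum_mul, hp1, one_mul,
          ← Finset.mul_sum, ← Finset.mul_sum]
    _ ≤ _ := by
        have h4 : 2 * η * (avgF n f x - avgF n f xstar + (μ / 2) * ‖x - xstar‖ ^ 2)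
            ≤ 2 * η * ⟪avgG n f' x, x - xstar⟫ :=
          mul_le_mul_of_nonneg_left hlb (by linarith)
        nlinarith [h4]
end

section
/- Suppose each f_i is convex and L_i-smooth, F is L_F-smooth, and x* is a global minimizer of F (so ∇F(x*) = 0). Let p be a probability vector with positive entries, x, w ∈ ℝ^d, and g_i = (1/(n p_i))(∇f_i(x) − ∇f_i(w)) + ∇F(w). Then ∑_{i=1}^n p_i ‖g_i‖² ≤ 4L̄(F(x) − F(x*)) + 2L_F(F(x) − F(x*)) + 2L̄·D(w) + V_e(p; x, w) − V_e(p^IS; x, w), where D(w) = (1/n)∑_{i=1}^n (1/L_i)‖∇f_i(w) − ∇f_i(x*)‖². -/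
open MeasureTheory Finset
open scoped RealInnerProductSpace BigOperators

section myaux
variable {E : Type*} [NormedAddCommGroup E] [InnerProductSpace ℝ E] [CompleteSpace E]

lemma hasGradientAt_inner_const (c z : E) :
    HasGradientAt (fun y => ⟪c, y⟫) c z :=
  (InnerProductSpace.toDual ℝ E c).hasFDerivAt

lemma descent_lemma_s9 {φ : E → ℝ} {g : E → E} (hg : ∀ z, HasGradientAt φ (g z) z)
    {C : ℝ} (hC : 0 ≤ C) (hlip : ∀ a b, ‖g a - g b‖ ≤ C * ‖a - b‖) (x y : E) :
    φ y ≤ φ x + ⟪g x, y - x⟫ + C / 2 * ‖y - x‖ ^ 2 := by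
  set v := y - x with hv
  have hline : ∀ t : ℝ, HasDerivAt (fun t : ℝ => φ (x + t • v)) ⟪g (x + t • v), v⟫ t := by
    intro t
    have h1 : HasDerivAt (fun t : ℝ => x + t • v) v t := by
      simpa using ((hasDerivAt_id t).smul_const v).const_add x
    have h2 := (hg (x + t • v)).hasFDerivAt.comp_hasDerivAt t h1
    simp [InnerProductSpace.toDual_apply_apply] at h2; exact h2
  set h : ℝ → ℝ := fun t => φ (x + t • v) - (t * ⟪g x, v⟫ + C / 2 * ‖v‖ ^ 2 * t ^ 2) with hh
  have hder : ∀ t : ℝ, HasDerivAt h (⟪g (x + t • v), v⟫ - (⟪g x, v⟫ + C * ‖v‖ ^ 2 * t)) t := by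
    intro t
    have hp : HasDerivAt (fun t : ℝ => t * ⟪g x, v⟫ + C / 2 * ‖v‖ ^ 2 * t ^ 2)
        (⟪g x, v⟫ + C * ‖v‖ ^ 2 * t) t := by
      have := ((hasDerivAt_id t).mul_const ⟪g x, v⟫).add
        ((hasDerivAt_pow 2 t).const_mul (C / 2 * ‖v‖ ^ 2))
      convert this using 1
      · rfl
      · rfl
      · rfl
      · simp only [Nat.reduceSub, pow_one, Nat.cast_ofNat]; ring
    exact (hline t).sub hp
  have hanti : AntitoneOn h (Set.Icc (0:ℝ) 1) := by
    apply antitoneOn_of_deriv_nonpos (convex_Icc 0 1)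
    · exact (Differentiable.continuous (fun t => (hder t).differentiableAt)).continuousOn
    · exact (fun t _ => (hder t).differentiableAt.differentiableWithinAt)
    · intro t ht
      rw [interior_Icc] at ht
      rw [(hder t).deriv]
      have h1 : ⟪g (x + t • v) - g x, v⟫ ≤ ‖g (x + t • v) - g x‖ * ‖v‖ :=
        real_inner_le_norm _ _
      have h2 : ‖g (x + t • v) - g x‖ ≤ C * (t * ‖v‖) := by
        have := hlip (x + t • v) x
        simpa [norm_smul, abs_of_nonneg ht.1.le] using this
      have h3 : ‖g (x + t • v) - g x‖ * ‖v‖ ≤ C * (t * ‖v‖) * ‖v‖ :=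
        mul_le_mul_of_nonneg_right h2 (norm_nonneg _)
      rw [inner_sub_left] at h1
      nlinarith [norm_nonneg v]
  have := hanti (Set.left_mem_Icc.2 zero_le_one) (Set.right_mem_Icc.2 zero_le_one) zero_le_one
  have h0 : h 0 = φ x := by simp [hh]
  have h1 : h 1 = φ y - (⟪g x, v⟫ + C / 2 * ‖v‖ ^ 2) := by
    simp [hh, hv]
  rw [h0, h1] at this
  linarith

lemma cocoercivity {φ : E → ℝ} {g : E → E} (hg : ∀ z, HasGradientAt φ (g z) z)
    (hconv : ∀ a b, φ a + ⟪g a, b - a⟫ ≤ φ b)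
    {C : ℝ} (hC : 0 < C) (hlip : ∀ a b, ‖g a - g b‖ ≤ C * ‖a - b‖) (x y : E) :
    ‖g x - g y‖ ^ 2 ≤ 2 * C * (φ x - φ y - ⟪g y, x - y⟫) := by
  set ψ : E → ℝ := fun z => φ z - ⟪g y, z⟫ with hψ
  have hgψ : ∀ z, HasGradientAt ψ (g z - g y) z := by
    intro z
    have h1 := (hg z).hasFDerivAt.sub
      (InnerProductSpace.toDual ℝ E (g y)).hasFDerivAt
    rw [hasGradientAt_iff_hasFDerivAt, map_sub]
    exact h1
  have hlipψ : ∀ a b, ‖(g a - g y) - (g b - g y)‖ ≤ C * ‖a - b‖ := by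
    intro a b; simpa [sub_sub_sub_cancel_right] using hlip a b
  set y' : E := x - C⁻¹ • (g x - g y) with hy'
  have hdes := descent_lemma_s9 hgψ hC.le hlipψ x y'
  have hyy' : ψ y ≤ ψ y' := by
    have := hconv y y'
    simp only [hψ]
    rw [inner_sub_right] at this
    linarith
  have hkey : y' - x = -(C⁻¹ • (g x - g y)) := by rw [hy']; abel
  rw [hkey] at hdes
  have e1 : ⟪g x - g y, -(C⁻¹ • (g x - g y))⟫ = -(C⁻¹ * ‖g x - g y‖ ^ 2) := by
    rw [inner_neg_right, real_inner_smul_right, real_inner_self_eq_norm_sq]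
  have e2 : ‖-(C⁻¹ • (g x - g y))‖ ^ 2 = C⁻¹ ^ 2 * ‖g x - g y‖ ^ 2 := by
    rw [norm_neg, norm_smul, mul_pow, Real.norm_eq_abs, sq_abs]
  rw [e1, e2] at hdes
  have hinner : ⟪g y, x - y⟫ = ⟪g y, x⟫ - ⟪g y, y⟫ := inner_sub_right _ _ _
  simp only [hψ] at hdes hyy'
  have e3 : C / 2 * (C⁻¹ ^ 2 * ‖g x - g y‖ ^ 2) = C⁻¹ / 2 * ‖g x - g y‖ ^ 2 := by
    field_simp
  have key : C⁻¹ / 2 * ‖g x - g y‖ ^ 2 ≤ (φ x - ⟪g y, x⟫) - (φ y - ⟪g y, y⟫) := by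
    have h5 : C⁻¹ / 2 * ‖g x - g y‖ ^ 2 ≤
        C⁻¹ * ‖g x - g y‖ ^ 2 - C / 2 * (C⁻¹ ^ 2 * ‖g x - g y‖ ^ 2) := by
      rw [e3]; linarith [sq_nonneg ‖g x - g y‖]
    linarith [hdes, hyy', h5]
  have e4 := mul_le_mul_of_nonneg_left key (by positivity : (0:ℝ) ≤ 2 * C)
  have e5 : 2 * C * (C⁻¹ / 2 * ‖g x - g y‖ ^ 2) = ‖g x - g y‖ ^ 2 := by
    field_simp
  rw [e5] at e4
  have e6 : (φ x - ⟪g y, x⟫) - (φ y - ⟪g y, y⟫) = φ x - φ y - ⟪g y, x - y⟫ := by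
    rw [hinner]; ring
  rw [e6] at e4
  exact e4

lemma scalar_id (nr pi A B Cw : ℝ) (hn : nr ≠ 0) (hp : pi ≠ 0) :
    pi * ((1/(nr*pi))^2 * A^2 + 2 * (1/(nr*pi) * B) + Cw^2)
      = 1/nr^2 * (1/pi * A^2) + 2/nr * B + pi * Cw^2 := by
  field_simp

end myaux
/-- second-moment bound for the AS-LSVRG stochastic gradient. -/
theorem as_lsvrg_second_moment_bound (d n : ℕ) (hd : 0 < d) (hn : 0 < n)
    (f : Fin n → Euc d → ℝ) (f' : Fin n → Euc d → Euc d) (L : Fin n → ℝ) (LF : ℝ)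
    (hgrad : ∀ i x, HasGradientAt (f i) (f' i x) x)
    (hconv : ∀ i x y, f i x + ⟪f' i x, y - x⟫ ≤ f i y)
    (hLpos : ∀ i, 0 < L i)
    (hsmooth : ∀ i x y, ‖f' i x - f' i y‖ ≤ L i * ‖x - y‖)
    (hLF : ∀ x y, ‖avgG n f' x - avgG n f' y‖ ≤ LF * ‖x - y‖)
    (xstar : Euc d) (hmin : ∀ y, avgF n f xstar ≤ avgF n f y)
    (p : Fin n → ℝ) (hp : ∀ i, 0 < p i) (hp1 : ∑ i, p i = 1)
    (x w : Euc d)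
    (g : Fin n → Euc d)
    (hg : ∀ i, g i = (1 / ((n : ℝ) * p i)) • (f' i x - f' i w) + avgG n f' w) :
    ∑ i, p i * ‖g i‖ ^ 2 ≤
      4 * Lbar n L * (avgF n f x - avgF n f xstar) +
      2 * LF * (avgF n f x - avgF n f xstar) +
      2 * Lbar n L * Dfun n f' L xstar w +
      Ve n f' p x w - Ve n f' (pIS n L) x w := by
  have hnR : (0:ℝ) < (n:ℝ) := Nat.cast_pos.2 hn
  have hninv : (0:ℝ) < 1 / (n:ℝ) := by positivity
  -- F has gradient avgG
  have hFgrad : ∀ z, HasGradientAt (avgF n f) (avgG n f' z) z := by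
    intro z
    have h1 : HasFDerivAt (fun y => ∑ i, f i y)
        (∑ i, InnerProductSpace.toDual ℝ (Euc d) (f' i z)) z :=
      HasFDerivAt.fun_sum (fun i _ => (hgrad i z).hasFDerivAt)
    have h2 := h1.const_mul (1 / (n:ℝ))
    have h3 : InnerProductSpace.toDual ℝ (Euc d) (avgG n f' z)
        = (1 / (n:ℝ)) • ∑ i, InnerProductSpace.toDual ℝ (Euc d) (f' i z) := by
      ext v
      simp [avgG, real_inner_smul_left, sum_inner]
    rw [hasGradientAt_iff_hasFDerivAt, h3]
    exact h2
  -- LF is nonnegative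
  have hLF0 : 0 ≤ LF := by
    have h1 := hLF (EuclideanSpace.single (⟨0, hd⟩ : Fin d) (1:ℝ)) 0
    have h2 : ‖EuclideanSpace.single (⟨0, hd⟩ : Fin d) (1:ℝ) - 0‖ = 1 := by
      simp [EuclideanSpace.norm_single]
    rw [h2, mul_one] at h1
    exact le_trans (norm_nonneg _) h1
  -- gradient vanishes at the minimizer
  have hGstar : avgG n f' xstar = 0 := by
    have hloc : IsLocalMin (avgF n f) xstar := Filter.Eventually.of_forall hmin
    have h0 := hloc.hasFDerivAt_eq_zero (hFgrad xstar).hasFDerivAt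
    have h1 : InnerProductSpace.toDual ℝ (Euc d) (avgG n f' xstar)
        = InnerProductSpace.toDual ℝ (Euc d) 0 := by rw [h0, map_zero]
    exact (InnerProductSpace.toDual ℝ (Euc d)).injective h1
  have hsum0 : ∑ i, f' i xstar = 0 := by
    have h := hGstar
    rw [avgG] at h
    rcases smul_eq_zero.1 h with h | h
    · exact absurd h hninv.ne'
    · exact h
  have hLbar : 0 < Lbar n L := by
    have : Nonempty (Fin n) := ⟨⟨0, hn⟩⟩
    have h1 : 0 < ∑ i, L i := Finset.sum_pos (fun i _ => hLpos i) Finset.univ_nonempty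
    rw [Lbar]
    exact mul_pos hninv h1
  -- bound1 : ‖∇F x‖² ≤ 2 LF (F x - F x*)
  have bound1 : ‖avgG n f' x‖ ^ 2 ≤ 2 * LF * (avgF n f x - avgF n f xstar) := by
    rcases hLF0.lt_or_eq with hpos | heq
    · have hdes := descent_lemma_s9 hFgrad hLF0 hLF x (x - LF⁻¹ • avgG n f' x)
      have hkey : (x - LF⁻¹ • avgG n f' x) - x = -(LF⁻¹ • avgG n f' x) := by abel
      rw [hkey] at hdes
      have e1 : ⟪avgG n f' x, -(LF⁻¹ • avgG n f' x)⟫ = -(LF⁻¹ * ‖avgG n f' x‖ ^ 2) := by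
        rw [inner_neg_right, real_inner_smul_right, real_inner_self_eq_norm_sq]
      have e2 : ‖-(LF⁻¹ • avgG n f' x)‖ ^ 2 = LF⁻¹ ^ 2 * ‖avgG n f' x‖ ^ 2 := by
        rw [norm_neg, norm_smul, mul_pow, Real.norm_eq_abs, sq_abs]
      rw [e1, e2] at hdes
      have hm := hmin (x - LF⁻¹ • avgG n f' x)
      have e3 : LF / 2 * (LF⁻¹ ^ 2 * ‖avgG n f' x‖ ^ 2) = LF⁻¹ / 2 * ‖avgG n f' x‖ ^ 2 := by
        field_simp
      have key : LF⁻¹ / 2 * ‖avgG n f' x‖ ^ 2 ≤ avgF n f x - avgF n f xstar := by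
        have h5 : LF⁻¹ / 2 * ‖avgG n f' x‖ ^ 2 ≤
            LF⁻¹ * ‖avgG n f' x‖ ^ 2 - LF / 2 * (LF⁻¹ ^ 2 * ‖avgG n f' x‖ ^ 2) := by
          rw [e3]; linarith [sq_nonneg ‖avgG n f' x‖]
        linarith [hdes, hm, h5]
      have e4 := mul_le_mul_of_nonneg_left key (by positivity : (0:ℝ) ≤ 2 * LF)
      have e5 : 2 * LF * (LF⁻¹ / 2 * ‖avgG n f' x‖ ^ 2) = ‖avgG n f' x‖ ^ 2 := by
        field_simp
      rw [e5] at e4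
      exact e4
    · have h1 := hLF x xstar
      rw [← heq, zero_mul] at h1
      have h2 : avgG n f' x = avgG n f' xstar :=
        sub_eq_zero.1 (norm_le_zero_iff.1 h1)
      rw [h2, hGstar, ← heq]
      simp
  -- per-i cocoercivity, summed
  have bound2 : (1/(n:ℝ)) * ∑ i, (1 / L i) * ‖f' i x - f' i xstar‖ ^ 2
      ≤ 2 * (avgF n f x - avgF n f xstar) := by
    have hper : ∀ i, (1 / L i) * ‖f' i x - f' i xstar‖ ^ 2
        ≤ 2 * (f i x - f i xstar - ⟪f' i xstar, x - xstar⟫) := by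
      intro i
      have h1 := cocoercivity (hgrad i) (hconv i) (hLpos i) (hsmooth i) x xstar
      have h2 := mul_le_mul_of_nonneg_left h1 (one_div_pos.2 (hLpos i)).le
      have h3 : (1 / L i) * (2 * L i * (f i x - f i xstar - ⟪f' i xstar, x - xstar⟫))
          = 2 * (f i x - f i xstar - ⟪f' i xstar, x - xstar⟫) := by
        field_simp [(hLpos i).ne']
      linarith [h2, h3.le, h3.ge]
    have hsum := Finset.sum_le_sum (fun i (_ : i ∈ Finset.univ) => hper i)
    have hzero : ∑ i, ⟪f' i xstar, x - xstar⟫ = 0 := by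
      rw [← sum_inner, hsum0, inner_zero_left]
    have hs2 : ∑ i, 2 * (f i x - f i xstar - ⟪f' i xstar, x - xstar⟫)
        = 2 * ((∑ i, f i x) - ∑ i, f i xstar) := by
      rw [← Finset.mul_sum, Finset.sum_sub_distrib, Finset.sum_sub_distrib, hzero]
      ring
    rw [hs2] at hsum
    have h4 := mul_le_mul_of_nonneg_left hsum hninv.le
    have h5 : (1/(n:ℝ)) * (2 * ((∑ i, f i x) - ∑ i, f i xstar))
        = 2 * (avgF n f x - avgF n f xstar) := by
      rw [avgF, avgF]; ring
    rw [h5] at h4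
    exact h4
  -- bound3 : Ve pIS ≤ 2 L̄ (1/n ∑ (1/L i)‖f'i x - f'i x*‖²) + 2 L̄ D(w)
  have bound3 : Ve n f' (pIS n L) x w
      ≤ 2 * Lbar n L * ((1/(n:ℝ)) * ∑ i, (1 / L i) * ‖f' i x - f' i xstar‖ ^ 2)
        + 2 * Lbar n L * Dfun n f' L xstar w := by
    have hper : ∀ i, (1 / pIS n L i) * ‖f' i x - f' i w‖ ^ 2
        ≤ ((n:ℝ) * Lbar n L) * ((1 / L i) *
          (2 * ‖f' i x - f' i xstar‖ ^ 2 + 2 * ‖f' i w - f' i xstar‖ ^ 2)) := by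
      intro i
      have h1 : (1 / pIS n L i) = ((n:ℝ) * Lbar n L) * (1 / L i) := by
        rw [pIS, one_div_div, mul_one_div]
      have htr : ‖f' i x - f' i w‖ ≤ ‖f' i x - f' i xstar‖ + ‖f' i w - f' i xstar‖ := by
        have := norm_sub_le (f' i x - f' i xstar) (f' i w - f' i xstar)
        simpa [sub_sub_sub_cancel_right] using this
      have hsq : ‖f' i x - f' i w‖ ^ 2
          ≤ 2 * ‖f' i x - f' i xstar‖ ^ 2 + 2 * ‖f' i w - f' i xstar‖ ^ 2 := by
        nlinarith [norm_nonneg (f' i x - f' i w), norm_nonneg (f' i x - f' i xstar),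
          norm_nonneg (f' i w - f' i xstar),
          sq_nonneg (‖f' i x - f' i xstar‖ - ‖f' i w - f' i xstar‖)]
      rw [h1, mul_assoc]
      exact mul_le_mul_of_nonneg_left
        (mul_le_mul_of_nonneg_left hsq (one_div_pos.2 (hLpos i)).le)
        (mul_nonneg hnR.le hLbar.le)
    have hsum := Finset.sum_le_sum (fun i (_ : i ∈ Finset.univ) => hper i)
    have h2 := mul_le_mul_of_nonneg_left hsum (by positivity : (0:ℝ) ≤ 1/((n:ℝ))^2)
    have h3 : (1/((n:ℝ))^2) * ∑ i, ((n:ℝ) * Lbar n L) * ((1 / L i) *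
          (2 * ‖f' i x - f' i xstar‖ ^ 2 + 2 * ‖f' i w - f' i xstar‖ ^ 2))
        = 2 * Lbar n L * ((1/(n:ℝ)) * ∑ i, (1 / L i) * ‖f' i x - f' i xstar‖ ^ 2)
          + 2 * Lbar n L * ((1/(n:ℝ)) * ∑ i, (1 / L i) * ‖f' i w - f' i xstar‖ ^ 2) := by
      rw [Finset.mul_sum, Finset.mul_sum, Finset.mul_sum, Finset.mul_sum, Finset.mul_sum]
      rw [← Finset.sum_add_distrib]
      refine Finset.sum_congr rfl (fun i _ => ?_)
      field_simp [(hLpos i).ne', hnR.ne']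
    have hDf : Dfun n f' L xstar w
        = (1/(n:ℝ)) * ∑ i, (1 / L i) * ‖f' i w - f' i xstar‖ ^ 2 := rfl
    calc Ve n f' (pIS n L) x w
        = (1/((n:ℝ))^2) * ∑ i, (1 / pIS n L i) * ‖f' i x - f' i w‖ ^ 2 := rfl
      _ ≤ (1/((n:ℝ))^2) * ∑ i, ((n:ℝ) * Lbar n L) * ((1 / L i) *
          (2 * ‖f' i x - f' i xstar‖ ^ 2 + 2 * ‖f' i w - f' i xstar‖ ^ 2)) := h2
      _ = _ := by rw [h3, hDf]
  -- main identity
  have hmain : ∑ i, p i * ‖g i‖ ^ 2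
      = Ve n f' p x w + 2 * ⟪avgG n f' x - avgG n f' w, avgG n f' w⟫
        + ‖avgG n f' w‖ ^ 2 := by
    have hper : ∀ i : Fin n, p i * ‖g i‖ ^ 2
        = (1/((n:ℝ))^2) * ((1 / p i) * ‖f' i x - f' i w‖ ^ 2)
          + (2/(n:ℝ)) * ⟪f' i x - f' i w, avgG n f' w⟫
          + p i * ‖avgG n f' w‖ ^ 2 := by
      intro i
      have hpi := (hp i).ne'
      have hn' := hnR.ne'
      rw [hg i, norm_add_sq_real, norm_smul, real_inner_smul_left, mul_pow,
        Real.norm_eq_abs, sq_abs]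
      exact scalar_id (n:ℝ) (p i) ‖f' i x - f' i w‖ ⟪f' i x - f' i w, avgG n f' w⟫
        ‖avgG n f' w‖ hn' hpi
    rw [Finset.sum_congr rfl (fun i _ => hper i)]
    rw [Finset.sum_add_distrib, Finset.sum_add_distrib]
    congr 1
    congr 1
    · rw [← Finset.mul_sum]
      rfl
    · rw [← Finset.mul_sum, ← sum_inner]
      have hsv : ∑ i, (f' i x - f' i w) = (n:ℝ) • (avgG n f' x - avgG n f' w) := by
        rw [avgG, avgG, ← smul_sub, smul_smul, ← Finset.sum_sub_distrib,
          mul_one_div, div_self hnR.ne', one_smul]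
      rw [hsv, real_inner_smul_left]
      ring_nf
      rw [mul_inv_cancel₀ hnR.ne', one_mul]
    · rw [← Finset.sum_mul, hp1, one_mul]
  have hGid : ‖avgG n f' x‖ ^ 2
      = ‖avgG n f' x - avgG n f' w‖ ^ 2
        + 2 * ⟪avgG n f' x - avgG n f' w, avgG n f' w⟫ + ‖avgG n f' w‖ ^ 2 := by
    have h1 := norm_add_sq_real (avgG n f' x - avgG n f' w) (avgG n f' w)
    have h2 : avgG n f' x - avgG n f' w + avgG n f' w = avgG n f' x := by abel
    rw [h2] at h1
    exact h1
  have hb4 := mul_le_mul_of_nonneg_left bound2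
    (by linarith : (0:ℝ) ≤ 2 * Lbar n L)
  linarith [hmain, hGid, bound1, bound3, hb4,
    sq_nonneg ‖avgG n f' x - avgG n f' w‖]
end
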